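/- Let W be a stored-energy density satisfying the standard assumptions (see context) and Q3(F) = D²W(Id)(F,F). Then Q3 is positive definite on symmetric matrices in the quantitative sense: there exists a constant c > 0 such that Q3(F) ≥ c |sym F|² for every F ∈ ℝ^{3×3}, where |·| denotes the Frobenius norm. -/

import Mathlib

/- Frobenius norm instances on matrices -/
attribute [local instance] Matrix.frobeniusNormedAddCommGroup Matrix.frobeniusNormedSpace

open Matrix

/-- The rotation group SO(3). -/
def SO3 : Set (Matrix (Fin 3) (Fin 3) ℝ) :=
  {R | Rᵀ * R = 1 ∧ R.det = 1}

/-- The symmetric part of a matrix. -/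
noncomputable def symPart (F : Matrix (Fin 3) (Fin 3) ℝ) : Matrix (Fin 3) (Fin 3) ℝ :=
  (1 / 2 : ℝ) • (F + Fᵀ)

namespace Q3Aux

/-- Any matrix with `Rᵀ * R = 1` has Frobenius norm `√3`. -/
lemma norm_of_orth {R : Matrix (Fin 3) (Fin 3) ℝ} (hR : Rᵀ * R = 1) :
    ‖R‖ = Real.sqrt 3 := by
  have e1 : ∀ x : ℝ, ‖x‖ ^ (2 : ℝ) = x ^ 2 := fun x => by
    rw [show (2 : ℝ) = ((2 : ℕ) : ℝ) by norm_num, Real.rpow_natCast, Real.norm_eq_abs, sq_abs]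
  have key : ∀ j, (∑ i, R i j ^ 2) = 1 := by
    intro j
    have h := congrFun (congrFun hR j) j
    rw [Matrix.mul_apply] at h
    simpa [Matrix.transpose_apply, Matrix.one_apply, sq] using h
  have hsum : (∑ i, ∑ j, ‖R i j‖ ^ (2 : ℝ)) = 3 := by
    simp_rw [e1]
    rw [Finset.sum_comm]
    simp [key]
  rw [Matrix.frobenius_norm_def, hsum, Real.sqrt_eq_rpow]

lemma norm_one3 : ‖(1 : Matrix (Fin 3) (Fin 3) ℝ)‖ = Real.sqrt 3 :=
  norm_of_orth (by simp)

lemma expand (t : ℝ) (G : Matrix (Fin 3) (Fin 3) ℝ) :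
    (1 + t • G)ᵀ * (1 + t • G) - 1 = t • (G + Gᵀ) + (t * t) • (Gᵀ * G) := by
  rw [transpose_add, transpose_one, transpose_smul]
  simp only [add_mul, mul_add, one_mul, mul_one, Matrix.smul_mul, Matrix.mul_smul, smul_smul,
    smul_add]
  abel

lemma split (F R : Matrix (Fin 3) (Fin 3) ℝ) :
    Fᵀ * F - Rᵀ * R = Fᵀ * (F - R) + (F - R)ᵀ * R := by
  rw [transpose_sub]
  noncomm_ring

lemma norm_add_transpose (G : Matrix (Fin 3) (Fin 3) ℝ) :
    ‖G + Gᵀ‖ = 2 * ‖symPart G‖ := by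
  have h : ‖symPart G‖ = (1 / 2 : ℝ) * ‖G + Gᵀ‖ := by
    rw [symPart, norm_smul]
    norm_num
  rw [h]; ring

end Q3Aux

set_option maxHeartbeats 1000000 in
/-- the quadratic form `Q3(F) = D²W(Id)(F,F)` is positive definite on symmetric
matrices, quantitatively: `Q3(F) ≥ c |sym F|²` for some `c > 0`, with `|·|` the Frobenius norm. -/
theorem Q3_positive_definite_on_symmetric
    (W : Matrix (Fin 3) (Fin 3) ℝ → ℝ)
    (hWpos : ∀ F, 0 ≤ W F)
    (hW_C2 : ∃ U : Set (Matrix (Fin 3) (Fin 3) ℝ), IsOpen U ∧ SO3 ⊆ U ∧ ContDiffOn ℝ 2 W U)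
    (hW0 : ∀ R ∈ SO3, W R = 0)
    (hWframe : ∀ R ∈ SO3, ∀ F, W (R * F) = W F)
    (hWcoerc : ∃ C > 0, ∀ F, C * (Metric.infDist F SO3) ^ 2 ≤ W F)
    (Q3 : Matrix (Fin 3) (Fin 3) ℝ → ℝ)
    (hQ3 : ∀ G, Q3 G = (iteratedFDeriv ℝ 2 W 1) ![G, G]) :
    ∃ c > 0, ∀ F : Matrix (Fin 3) (Fin 3) ℝ, c * ‖symPart F‖ ^ 2 ≤ Q3 F := by
  obtain ⟨U, hUo, hSU, hC2⟩ := hW_C2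
  obtain ⟨C, hC, hcoer⟩ := hWcoerc
  letI : TopologicalSpace (Matrix (Fin 3) (Fin 3) ℝ) :=
    (Matrix.frobeniusNormedAddCommGroup : NormedAddCommGroup (Matrix (Fin 3) (Fin 3) ℝ)).toUniformSpace.toTopologicalSpace
  have h1SO : (1 : Matrix (Fin 3) (Fin 3) ℝ) ∈ SO3 := ⟨by simp, by simp⟩
  have h1U : (1 : Matrix (Fin 3) (Fin 3) ℝ) ∈ U := hSU h1SO
  have hW1 : W 1 = 0 := hW0 1 h1SO
  have hdW1 : fderiv ℝ W 1 = 0 := by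
    have hmin : IsLocalMin W 1 := Filter.Eventually.of_forall fun x => by
      rw [hW1]; exact hWpos x
    exact hmin.fderiv_eq_zero
  have hWdiff : DifferentiableOn ℝ W U := hC2.differentiableOn (by norm_num)
  have hf'C1 : ContDiffOn ℝ 1 (fderiv ℝ W) U := hC2.fderiv_of_isOpen hUo (by norm_num)
  have hf''C0 : ContDiffOn ℝ 0 (fderiv ℝ (fderiv ℝ W)) U :=
    hf'C1.fderiv_of_isOpen hUo (by norm_num)
  have hf''cont : ContinuousOn (fderiv ℝ (fderiv ℝ W)) U := hf''C0.continuousOn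
  refine ⟨2 * C / 3, by positivity, fun G => ?_⟩
  set s : ℝ := ‖symPart G‖ with hs_def
  have hs0 : 0 ≤ s := norm_nonneg _
  set L : ℝ → Matrix (Fin 3) (Fin 3) ℝ := fun t => 1 + t • G with hL_def
  have hLcont : Continuous L := continuous_const.add (continuous_id.smul continuous_const)
  have hL0 : L 0 = 1 := by simp [hL_def]
  obtain ⟨δ, hδ, hball⟩ : ∃ δ > 0, Metric.ball (0 : ℝ) δ ⊆ L ⁻¹' U := by
    have hop : IsOpen (L ⁻¹' U) := hUo.preimage hLcont
    have h0 : (0 : ℝ) ∈ L ⁻¹' U := by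
      simp only [Set.mem_preimage, hL0]; exact h1U
    exact Metric.isOpen_iff.1 hop 0 h0
  have hLder : ∀ t : ℝ, HasDerivAt L G t := by
    intro t
    have h1 : HasDerivAt (fun t : ℝ => t • G) ((1 : ℝ) • G) t := (hasDerivAt_id t).smul_const G
    simpa [hL_def] using h1.const_add (1 : Matrix (Fin 3) (Fin 3) ℝ)
  have hg' : ∀ t ∈ Metric.ball (0 : ℝ) δ,
      HasDerivAt (fun t => W (L t)) (fderiv ℝ W (L t) G) t := by
    intro t ht
    have hmem : L t ∈ U := hball ht
    have hWd : HasFDerivAt W (fderiv ℝ W (L t)) (L t) :=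
      (hWdiff.differentiableAt (hUo.mem_nhds hmem)).hasFDerivAt
    exact hWd.comp_hasDerivAt t (hLder t)
  have hg'' : ∀ t ∈ Metric.ball (0 : ℝ) δ,
      HasDerivAt (fun t => fderiv ℝ W (L t) G) (fderiv ℝ (fderiv ℝ W) (L t) G G) t := by
    intro t ht
    have hmem : L t ∈ U := hball ht
    have hf'd : HasFDerivAt (fderiv ℝ W) (fderiv ℝ (fderiv ℝ W) (L t)) (L t) :=
      ((hf'C1.differentiableOn one_ne_zero).differentiableAt (hUo.mem_nhds hmem)).hasFDerivAt
    have h2 : HasDerivAt (fun t => fderiv ℝ W (L t)) (fderiv ℝ (fderiv ℝ W) (L t) G) t :=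
      hf'd.comp_hasDerivAt t (hLder t)
    have h3 := (ContinuousLinearMap.apply ℝ ℝ G).hasFDerivAt.comp_hasDerivAt t h2
    exact h3
  have hQ : Q3 G = fderiv ℝ (fderiv ℝ W) 1 G G := by
    rw [hQ3 G, iteratedFDeriv_two_apply]
    simp
  have hball0 : (0 : ℝ) ∈ Metric.ball (0 : ℝ) δ := Metric.mem_ball_self hδ
  have hIooball : ∀ t ∈ Set.Ioo (0 : ℝ) δ, t ∈ Metric.ball (0 : ℝ) δ := by
    intro t ht
    rw [Metric.mem_ball, Real.dist_eq, sub_zero]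
    exact abs_lt.2 ⟨by linarith [ht.1, hδ], ht.2⟩
  have hIoo_mem : Set.Ioo (0 : ℝ) δ ∈ nhdsWithin (0 : ℝ) (Set.Ioi 0) :=
    Ioo_mem_nhdsGT hδ
  -- Part A: the limit of W(L t)/t² is Q3 G / 2
  have htendA : Filter.Tendsto (fun t => W (L t) / t ^ 2)
      (nhdsWithin (0 : ℝ) (Set.Ioi 0)) (nhds (Q3 G / 2)) := by
    apply HasDerivAt.lhopital_zero_nhdsGT
      (f' := fun t => fderiv ℝ W (L t) G) (g' := fun t : ℝ => 2 * t)
    · exact Filter.eventually_of_mem hIoo_mem fun t ht => hg' t (hIooball t ht)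
    · refine Filter.Eventually.of_forall fun t => ?_
      simpa using hasDerivAt_pow 2 t
    · exact Filter.eventually_of_mem self_mem_nhdsWithin fun t ht =>
        by have : (0:ℝ) < t := ht; positivity
    · have hWc : ContinuousAt (fun t => W (L t)) 0 := by
        have h1 : ContinuousAt W (L 0) := by
          rw [hL0]; exact hC2.continuousOn.continuousAt (hUo.mem_nhds h1U)
        exact h1.comp hLcont.continuousAt
      have := hWc.tendsto.mono_left
        (nhdsWithin_le_nhds : nhdsWithin (0 : ℝ) (Set.Ioi 0) ≤ nhds 0)
      rwa [hL0, hW1] at this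
    · have : Filter.Tendsto (fun t : ℝ => t ^ 2) (nhds 0) (nhds 0) := by
        simpa using (continuous_pow 2).tendsto (0 : ℝ)
      exact this.mono_left nhdsWithin_le_nhds
    · -- second L'Hôpital
      apply HasDerivAt.lhopital_zero_nhdsGT
        (f' := fun t => fderiv ℝ (fderiv ℝ W) (L t) G G) (g' := fun _ : ℝ => 2)
      · exact Filter.eventually_of_mem hIoo_mem fun t ht => hg'' t (hIooball t ht)
      · refine Filter.Eventually.of_forall fun t => ?_
        simpa using (hasDerivAt_id t).const_mul (2 : ℝ)
      · exact Filter.Eventually.of_forall fun t => two_ne_zero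
      · have hc : ContinuousAt (fun t => fderiv ℝ W (L t) G) 0 :=
          (hg'' 0 hball0).continuousAt
        have := hc.tendsto.mono_left
          (nhdsWithin_le_nhds : nhdsWithin (0 : ℝ) (Set.Ioi 0) ≤ nhds 0)
        have hv : fderiv ℝ W (L 0) G = 0 := by rw [hL0, hdW1]; simp
        rwa [hv] at this
      · have : Filter.Tendsto (fun t : ℝ => 2 * t) (nhds 0) (nhds 0) := by
          simpa using (continuous_mul_left (2 : ℝ)).tendsto (0 : ℝ)
        exact this.mono_left nhdsWithin_le_nhds
      · have hcontA : Continuous (fun A : Matrix (Fin 3) (Fin 3) ℝ →L[ℝ]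
            (Matrix (Fin 3) (Fin 3) ℝ →L[ℝ] ℝ) => A G G) :=
          (ContinuousLinearMap.apply ℝ ℝ G).continuous.comp
            (ContinuousLinearMap.apply ℝ (Matrix (Fin 3) (Fin 3) ℝ →L[ℝ] ℝ) G).continuous
        have h1 : ContinuousAt (fderiv ℝ (fderiv ℝ W)) (L 0) := by
          rw [hL0]; exact hf''cont.continuousAt (hUo.mem_nhds h1U)
        have h2 : ContinuousAt (fun t => fderiv ℝ (fderiv ℝ W) (L t) G G) 0 :=
          hcontA.continuousAt.comp (h1.comp hLcont.continuousAt)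
        have h3 := (h2.tendsto.mono_left
          (nhdsWithin_le_nhds : nhdsWithin (0:ℝ) (Set.Ioi 0) ≤ nhds 0)).div_const 2
        have hv : fderiv ℝ (fderiv ℝ W) (L 0) G G = Q3 G := by rw [hL0, hQ]
        rwa [hv] at h3
  -- Part B: pointwise lower bound for small positive t
  have hkey : ∀ t : ℝ, 0 < t → 0 ≤ 2 * s - t * ‖G‖ ^ 2 →
      C * ((2 * s - t * ‖G‖ ^ 2) / (‖L t‖ + Real.sqrt 3)) ^ 2 ≤ W (L t) / t ^ 2 := by
    intro t ht hnum
    have hsqrt3 : (0 : ℝ) < Real.sqrt 3 := Real.sqrt_pos.2 (by norm_num)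
    have hden : (0 : ℝ) < ‖L t‖ + Real.sqrt 3 := by
      have := norm_nonneg (L t); linarith
    have hMlow : t * (2 * s - t * ‖G‖ ^ 2) ≤ ‖(L t)ᵀ * (L t) - 1‖ := by
      have hM : (L t)ᵀ * (L t) - 1 = t • (G + Gᵀ) + (t * t) • (Gᵀ * G) := Q3Aux.expand t G
      rw [hM]
      have h1 : ‖t • (G + Gᵀ)‖ = t * (2 * s) := by
        rw [norm_smul, Real.norm_eq_abs, abs_of_pos ht, Q3Aux.norm_add_transpose]
      have h2 : ‖(t * t) • (Gᵀ * G)‖ ≤ t * t * ‖G‖ ^ 2 := by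
        rw [norm_smul, Real.norm_eq_abs, abs_of_pos (mul_pos ht ht)]
        have hGG : ‖Gᵀ * G‖ ≤ ‖G‖ * ‖G‖ := by
          simpa [Matrix.frobenius_norm_transpose] using Matrix.frobenius_norm_mul Gᵀ G
        calc t * t * ‖Gᵀ * G‖ ≤ t * t * (‖G‖ * ‖G‖) :=
              mul_le_mul_of_nonneg_left hGG (by positivity)
          _ = t * t * ‖G‖ ^ 2 := by ring
      have h3 : ‖t • (G + Gᵀ)‖ - ‖(t * t) • (Gᵀ * G)‖ ≤
          ‖t • (G + Gᵀ) + (t * t) • (Gᵀ * G)‖ := by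
        have h4 := norm_add_le (t • (G + Gᵀ) + (t * t) • (Gᵀ * G)) (-((t * t) • (Gᵀ * G)))
        simp only [add_neg_cancel_right, norm_neg] at h4
        linarith
      nlinarith [h1, h2, h3]
    have hup : ∀ R ∈ SO3, ‖(L t)ᵀ * (L t) - 1‖ ≤ dist (L t) R * (‖L t‖ + Real.sqrt 3) := by
      intro R hR
      have hRn : ‖R‖ = Real.sqrt 3 := Q3Aux.norm_of_orth hR.1
      have hsplit : (L t)ᵀ * (L t) - 1 = (L t)ᵀ * (L t - R) + (L t - R)ᵀ * R := by
        rw [← hR.1]; exact Q3Aux.split (L t) R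
      rw [hsplit, dist_eq_norm]
      calc ‖(L t)ᵀ * (L t - R) + (L t - R)ᵀ * R‖
          ≤ ‖(L t)ᵀ * (L t - R)‖ + ‖(L t - R)ᵀ * R‖ := norm_add_le _ _
        _ ≤ ‖(L t)ᵀ‖ * ‖L t - R‖ + ‖(L t - R)ᵀ‖ * ‖R‖ :=
            add_le_add (Matrix.frobenius_norm_mul _ _) (Matrix.frobenius_norm_mul _ _)
        _ = ‖L t - R‖ * (‖L t‖ + Real.sqrt 3) := by
            rw [Matrix.frobenius_norm_transpose, Matrix.frobenius_norm_transpose, hRn]; ring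
    have hinf : t * (2 * s - t * ‖G‖ ^ 2) / (‖L t‖ + Real.sqrt 3) ≤
        Metric.infDist (L t) SO3 := by
      by_contra hcon
      push_neg at hcon
      obtain ⟨R, hR, hdR⟩ := (Metric.infDist_lt_iff ⟨1, h1SO⟩).1 hcon
      rw [lt_div_iff₀ hden] at hdR
      have h1 := hup R hR
      linarith [hMlow, h1, hdR]
    have hinf0 : 0 ≤ t * (2 * s - t * ‖G‖ ^ 2) / (‖L t‖ + Real.sqrt 3) := by positivity
    have hWlow : C * (t * (2 * s - t * ‖G‖ ^ 2) / (‖L t‖ + Real.sqrt 3)) ^ 2 ≤ W (L t) := by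
      have h1 := hcoer (L t)
      have h2 : (t * (2 * s - t * ‖G‖ ^ 2) / (‖L t‖ + Real.sqrt 3)) ^ 2 ≤
          Metric.infDist (L t) SO3 ^ 2 := pow_le_pow_left₀ hinf0 hinf 2
      nlinarith [mul_le_mul_of_nonneg_left h2 (le_of_lt hC)]
    rw [le_div_iff₀ (by positivity : (0 : ℝ) < t ^ 2)]
    calc C * ((2 * s - t * ‖G‖ ^ 2) / (‖L t‖ + Real.sqrt 3)) ^ 2 * t ^ 2
        = C * (t * (2 * s - t * ‖G‖ ^ 2) / (‖L t‖ + Real.sqrt 3)) ^ 2 := by ring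
      _ ≤ W (L t) := hWlow
  rcases eq_or_lt_of_le hs0 with hseq | hspos
  · -- degenerate case: ‖symPart G‖ = 0
    have hQnn : (0 : ℝ) ≤ Q3 G / 2 := by
      apply ge_of_tendsto htendA
      refine Filter.eventually_of_mem self_mem_nhdsWithin fun t ht => ?_
      have htpos : (0 : ℝ) < t := ht
      exact div_nonneg (hWpos _) (by positivity)
    rw [← hseq]
    nlinarith [hQnn]
  · -- main case: s > 0
    have hnorm1 : ‖(1 : Matrix (Fin 3) (Fin 3) ℝ)‖ = Real.sqrt 3 := Q3Aux.norm_one3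
    have hsqrt3 : (0 : ℝ) < Real.sqrt 3 := Real.sqrt_pos.2 (by norm_num)
    have hdenom0 : ‖L 0‖ + Real.sqrt 3 ≠ 0 := by
      rw [hL0, hnorm1]; positivity
    have hcontB : ContinuousAt
        (fun t : ℝ => C * ((2 * s - t * ‖G‖ ^ 2) / (‖L t‖ + Real.sqrt 3)) ^ 2) 0 := by
      apply ContinuousAt.mul continuousAt_const
      apply ContinuousAt.pow
      exact ContinuousAt.div (by fun_prop)
        ((hLcont.norm.add continuous_const).continuousAt) hdenom0
    have hval : C * ((2 * s - 0 * ‖G‖ ^ 2) / (‖L 0‖ + Real.sqrt 3)) ^ 2 = C * s ^ 2 / 3 := by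
      rw [hL0, hnorm1]
      have h3 : (Real.sqrt 3 + Real.sqrt 3) ^ 2 = 12 := by
        have h := Real.sq_sqrt (by norm_num : (0 : ℝ) ≤ 3)
        nlinarith [h]
      rw [div_pow, h3]
      ring
    have htendB : Filter.Tendsto
        (fun t : ℝ => C * ((2 * s - t * ‖G‖ ^ 2) / (‖L t‖ + Real.sqrt 3)) ^ 2)
        (nhdsWithin (0 : ℝ) (Set.Ioi 0)) (nhds (C * s ^ 2 / 3)) := by
      have h := hcontB.tendsto.mono_left
        (nhdsWithin_le_nhds : nhdsWithin (0 : ℝ) (Set.Ioi 0) ≤ nhds 0)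
      convert h using 2
      exact hval.symm
    have hev : ∀ᶠ t in nhdsWithin (0 : ℝ) (Set.Ioi 0),
        C * ((2 * s - t * ‖G‖ ^ 2) / (‖L t‖ + Real.sqrt 3)) ^ 2 ≤ W (L t) / t ^ 2 := by
      have ht0pos : (0 : ℝ) < 2 * s / (‖G‖ ^ 2 + 1) := by positivity
      refine Filter.eventually_of_mem
        (Ioo_mem_nhdsGT ht0pos) fun t ht => ?_
      refine hkey t ht.1 ?_
      have h2 := (lt_div_iff₀ (by positivity : (0 : ℝ) < ‖G‖ ^ 2 + 1)).1 ht.2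
      nlinarith [ht.1, h2]
    have hfinal : C * s ^ 2 / 3 ≤ Q3 G / 2 :=
      le_of_tendsto_of_tendsto htendB htendA hev
    linarith
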